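/- Let f : ℝⁿ → ℝ be a polynomial all of whose monomials x₁^{α₁}⋯xₙ^{αₙ} have weighted degree α₁w₁ + ⋯ + αₙwₙ ≥ d with respect to positive integer weights w₁, …, wₙ. Then there exist a constant C > 0 and a neighborhood U of the origin such that for all x ∈ U, (Σ_{i=1}^n ρ(x)^{2wᵢ} |∂f/∂xᵢ(x)|²)^{1/2} ≤ C · ρ(x)^d, where ρ(x) = (Σ_{i=1}^n |xᵢ|^{2/wᵢ})^{1/2}. -/

import Mathlib

open MvPolynomial

/-- Euclidean norm of the gradient of a polynomial `f` at `x`. -/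
noncomputable def gradNorm {n : ℕ} (f : MvPolynomial (Fin n) ℝ) (x : Fin n → ℝ) : ℝ :=
  Real.sqrt (∑ i, (eval x (pderiv i f)) ^ 2)

/-- Euclidean norm on `Fin n → ℝ`. -/
noncomputable def eNorm {n : ℕ} (x : Fin n → ℝ) : ℝ :=
  Real.sqrt (∑ i, (x i) ^ 2)

/-- `f` is weighted homogeneous of type `(d; w)`: every monomial `x^α` appearing in `f`
satisfies `∑ i, α i * w i = d`. -/
def IsWeightedHomog {n : ℕ} (f : MvPolynomial (Fin n) ℝ) (w : Fin n → ℕ) (d : ℕ) : Prop :=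
  ∀ α ∈ f.support, ∑ i, α i * w i = d

/-- `f` is non-degenerate (isolated singularity at the origin): in some neighborhood of `0`
the gradient of `f` vanishes only at the origin. -/
def Nondeg {n : ℕ} (f : MvPolynomial (Fin n) ℝ) : Prop :=
  ∃ U ∈ nhds (0 : Fin n → ℝ), ∀ x ∈ U, (∀ i, eval x (pderiv i f) = 0) → x = 0

/-- The Łojasiewicz inequality `‖∇f(x)‖ ≥ C ‖x‖^lam` holds near `0` for some `C > 0`. -/
def LojIneq {n : ℕ} (f : MvPolynomial (Fin n) ℝ) (lam : ℝ) : Prop :=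
  ∃ C > (0 : ℝ), ∃ U ∈ nhds (0 : Fin n → ℝ), ∀ x ∈ U, C * eNorm x ^ lam ≤ gradNorm f x

/-- The Łojasiewicz exponent of `f`: the infimum of all `lam > 0` for which the
Łojasiewicz inequality holds near the origin. -/
noncomputable def lojExp {n : ℕ} (f : MvPolynomial (Fin n) ℝ) : ℝ :=
  sInf {lam : ℝ | 0 < lam ∧ LojIneq f lam}

/-- The weighted "radius" `ρ(x) = (∑ i |x i| ^ (2 / w i)) ^ (1/2)`. -/
noncomputable def rho {n : ℕ} (w : Fin n → ℕ) (x : Fin n → ℝ) : ℝ :=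
  Real.sqrt (∑ i, |x i| ^ ((2 : ℝ) / (w i : ℝ)))

/-- The weighted norm of the gradient:
`‖grad_w f(x)‖_w = (∑ i ρ(x)^(2 wᵢ) |∂f/∂xᵢ(x)|²)^(1/2)`. -/
noncomputable def wGradNorm {n : ℕ} (w : Fin n → ℕ) (f : MvPolynomial (Fin n) ℝ)
    (x : Fin n → ℝ) : ℝ :=
  Real.sqrt (∑ i, rho w x ^ (2 * w i) * (eval x (pderiv i f)) ^ 2)

section Aux
open Finset

noncomputable def rho' {n : ℕ} (w : Fin n → ℕ) (x : Fin n → ℝ) : ℝ :=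
  Real.sqrt (∑ i, |x i| ^ ((2 : ℝ) / (w i : ℝ)))

lemma rho'_nonneg {n : ℕ} (w : Fin n → ℕ) (x : Fin n → ℝ) : 0 ≤ rho' w x :=
  Real.sqrt_nonneg _

lemma abs_le_rho'_pow {n : ℕ} (w : Fin n → ℕ) (hw : ∀ i, 0 < w i) (x : Fin n → ℝ)
    (i : Fin n) : |x i| ≤ rho' w x ^ (w i) := by
  set S : ℝ := ∑ j, |x j| ^ ((2 : ℝ) / (w j : ℝ)) with hSdef
  have hS : 0 ≤ S := Finset.sum_nonneg fun j _ => Real.rpow_nonneg (abs_nonneg _) _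
  have h1 : |x i| ^ ((2 : ℝ) / (w i : ℝ)) ≤ S :=
    Finset.single_le_sum (f := fun j => |x j| ^ ((2 : ℝ) / (w j : ℝ)))
      (fun j _ => Real.rpow_nonneg (abs_nonneg _) _) (mem_univ i)
  have hwi : (w i : ℝ) ≠ 0 := Nat.cast_ne_zero.mpr (hw i).ne'
  calc |x i| = (|x i| ^ ((2 : ℝ) / (w i : ℝ))) ^ ((w i : ℝ) / 2) := by
        rw [← Real.rpow_mul (abs_nonneg _)]
        rw [show (2 : ℝ) / (w i : ℝ) * ((w i : ℝ) / 2) = 1 by field_simp,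
          Real.rpow_one]
    _ ≤ S ^ ((w i : ℝ) / 2) :=
        Real.rpow_le_rpow (Real.rpow_nonneg (abs_nonneg _) _) h1 (by positivity)
    _ = rho' w x ^ (w i) := by
        rw [rho', Real.sqrt_eq_rpow, ← Real.rpow_natCast (S ^ ((1:ℝ)/2)) (w i),
          ← Real.rpow_mul hS]
        congr 1
        ring

lemma abs_eval_monomial_le {n : ℕ} (w : Fin n → ℕ) (hw : ∀ i, 0 < w i) (x : Fin n → ℝ)
    (β : Fin n →₀ ℕ) (c : ℝ) :
    |eval x (monomial β c)| ≤ |c| * rho' w x ^ (∑ i, β i * w i) := by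
  rw [eval_monomial, abs_mul, Finsupp.prod_fintype _ _ (fun i => pow_zero _)]
  apply mul_le_mul_of_nonneg_left _ (abs_nonneg c)
  calc |∏ i, x i ^ β i| = ∏ i, |x i| ^ β i := by
        rw [Finset.abs_prod]; simp [abs_pow]
    _ ≤ ∏ i, rho' w x ^ (w i * β i) := by
        apply Finset.prod_le_prod (fun i _ => pow_nonneg (abs_nonneg _) _)
        intro i _
        rw [pow_mul]
        exact pow_le_pow_left₀ (abs_nonneg _) (abs_le_rho'_pow w hw x i) _
    _ = rho' w x ^ (∑ i, β i * w i) := by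
        rw [Finset.prod_pow_eq_pow_sum]
        congr 1
        exact Finset.sum_congr rfl (fun i _ => Nat.mul_comm _ _)

lemma weight_sub_single {n : ℕ} (w : Fin n → ℕ) (α : Fin n →₀ ℕ) (i : Fin n)
    (h : 0 < α i) :
    w i + ∑ j, (α - Finsupp.single i 1 : Fin n →₀ ℕ) j * w j = ∑ j, α j * w j := by
  have key : ∀ j, (α - Finsupp.single i 1 : Fin n →₀ ℕ) j * w j + (Finsupp.single i 1) j * w j
      = α j * w j := by
    intro j
    rw [Finsupp.tsub_apply, ← add_mul, Nat.sub_add_cancel]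
    by_cases hj : j = i
    · subst hj; simpa [Finsupp.single_apply] using Nat.one_le_iff_ne_zero.mpr h.ne'
    · simp [Finsupp.single_apply, Ne.symm hj]
  have h2 : ∑ j, (Finsupp.single i 1 : Fin n →₀ ℕ) j * w j = w i := by
    rw [Finset.sum_eq_single i]
    · simp [Finsupp.single_apply]
    · intro j _ hj; simp [Finsupp.single_apply, Ne.symm hj]
    · intro h; exact absurd (mem_univ i) h
  calc w i + ∑ j, (α - Finsupp.single i 1 : Fin n →₀ ℕ) j * w j
      = ∑ j, ((α - Finsupp.single i 1 : Fin n →₀ ℕ) j * w j + (Finsupp.single i 1) j * w j) := by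
        rw [Finset.sum_add_distrib, h2]; ring
    _ = ∑ j, α j * w j := Finset.sum_congr rfl (fun j _ => key j)

lemma deriv_bound {n : ℕ} (d : ℕ) (w : Fin n → ℕ) (hw : ∀ i, 0 < w i)
    (f : MvPolynomial (Fin n) ℝ)
    (hdeg : ∀ α ∈ f.support, d ≤ ∑ i, α i * w i) (x : Fin n → ℝ)
    (hx : rho' w x ≤ 1) (i : Fin n) :
    rho' w x ^ (w i) * |eval x (pderiv i f)| ≤
      (∑ α ∈ f.support, |coeff α f| * ((∑ j, α j : ℕ) : ℝ)) * rho' w x ^ d := by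
  have hρ0 : 0 ≤ rho' w x := rho'_nonneg w x
  have hexp : eval x (pderiv i f)
      = ∑ α ∈ f.support, eval x (pderiv i (monomial α (coeff α f))) := by
    conv_lhs => rw [← support_sum_monomial_coeff f]
    rw [map_sum, map_sum]
  rw [hexp]
  calc rho' w x ^ (w i) * |∑ α ∈ f.support, eval x (pderiv i (monomial α (coeff α f)))|
      ≤ rho' w x ^ (w i) *
        ∑ α ∈ f.support, |eval x (pderiv i (monomial α (coeff α f)))| :=
        mul_le_mul_of_nonneg_left (Finset.abs_sum_le_sum_abs _ _) (pow_nonneg hρ0 _)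
    _ = ∑ α ∈ f.support,
        rho' w x ^ (w i) * |eval x (pderiv i (monomial α (coeff α f)))| :=
        Finset.mul_sum _ _ _
    _ ≤ ∑ α ∈ f.support, (|coeff α f| * ((∑ j, α j : ℕ) : ℝ)) * rho' w x ^ d := by
        apply Finset.sum_le_sum
        intro α hα
        rw [pderiv_monomial]
        rcases Nat.eq_zero_or_pos (α i) with h0 | hpos
        · simp only [h0, Nat.cast_zero, mul_zero, map_zero, abs_zero]
          positivity
        · have hle : α i ≤ ∑ j, α j :=
            Finset.single_le_sum (f := fun j => α j) (fun j _ => Nat.zero_le _)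
              (mem_univ i)
          have hd : d ≤ w i + ∑ j, (α - Finsupp.single i 1 : Fin n →₀ ℕ) j * w j := by
            rw [weight_sub_single w α i hpos]
            exact hdeg α hα
          calc rho' w x ^ (w i) *
              |eval x (monomial (α - Finsupp.single i 1) (coeff α f * (α i : ℝ)))|
              ≤ rho' w x ^ (w i) * (|coeff α f * (α i : ℝ)| *
                rho' w x ^ (∑ j, (α - Finsupp.single i 1 : Fin n →₀ ℕ) j * w j)) :=
                mul_le_mul_of_nonneg_left (abs_eval_monomial_le w hw x _ _)
                  (pow_nonneg hρ0 _)
            _ = (|coeff α f| * (α i : ℝ)) *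
                rho' w x ^ (w i + ∑ j, (α - Finsupp.single i 1 : Fin n →₀ ℕ) j * w j) := by
                rw [abs_mul, Nat.abs_cast, pow_add]
                ring
            _ ≤ (|coeff α f| * (α i : ℝ)) * rho' w x ^ d :=
                mul_le_mul_of_nonneg_left (pow_le_pow_of_le_one hρ0 hx hd)
                  (by positivity)
            _ ≤ (|coeff α f| * ((∑ j, α j : ℕ) : ℝ)) * rho' w x ^ d := by
                apply mul_le_mul_of_nonneg_right _ (by positivity)
                exact mul_le_mul_of_nonneg_left (Nat.cast_le.mpr hle) (abs_nonneg _)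
    _ = (∑ α ∈ f.support, |coeff α f| * ((∑ j, α j : ℕ) : ℝ)) * rho' w x ^ d :=
        (Finset.sum_mul _ _ _).symm

lemma rho_eq_rho' {n : ℕ} (w : Fin n → ℕ) (x : Fin n → ℝ) : rho w x = rho' w x := rfl


end Aux

theorem stmt4 (n d : ℕ) (w : Fin n → ℕ) (hw : ∀ i, 0 < w i)
    (f : MvPolynomial (Fin n) ℝ)
    (hdeg : ∀ α ∈ f.support, d ≤ ∑ i, α i * w i) :
    ∃ C > (0 : ℝ), ∃ U ∈ nhds (0 : Fin n → ℝ), ∀ x ∈ U,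
      wGradNorm w f x ≤ C * rho w x ^ d := by
  set M : ℝ := ∑ α ∈ f.support, |coeff α f| * ((∑ j, α j : ℕ) : ℝ) with hMdef
  have hM : 0 ≤ M :=
    Finset.sum_nonneg fun α _ => mul_nonneg (abs_nonneg _) (Nat.cast_nonneg _)
  have hcont : ContinuousAt (rho w) 0 := by
    apply ContinuousAt.comp Real.continuous_sqrt.continuousAt
    exact tendsto_finset_sum _ fun i _ =>
      (Real.continuousAt_rpow_const _ _ (Or.inr (by positivity))).comp
        ((continuous_abs.comp (continuous_apply i)).continuousAt)
  have h0 : rho w 0 = 0 := by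
    have hz : ∀ i : Fin n, (0 : ℝ) ^ ((2 : ℝ) / (w i : ℝ)) = 0 := fun i =>
      Real.zero_rpow (by
        have := hw i
        positivity)
    simp [rho, hz]
  refine ⟨Real.sqrt n * M + 1, by positivity, rho w ⁻¹' Set.Iio 1,
    hcont.preimage_mem_nhds (isOpen_Iio.mem_nhds (by simp [h0])), ?_⟩
  intro x hx
  have hx1 : rho w x ≤ 1 := le_of_lt hx
  have hρ0 : 0 ≤ rho w x := Real.sqrt_nonneg _
  have key : ∀ i, rho w x ^ (2 * w i) * (eval x (pderiv i f)) ^ 2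
      ≤ (M * rho w x ^ d) ^ 2 := by
    intro i
    have h1 : rho w x ^ (w i) * |eval x (pderiv i f)| ≤ M * rho w x ^ d := by
      rw [rho_eq_rho']
      exact deriv_bound d w hw f hdeg x (by rw [← rho_eq_rho']; exact hx1) i
    have h2 : (rho w x ^ (w i) * |eval x (pderiv i f)|) ^ 2
        = rho w x ^ (2 * w i) * (eval x (pderiv i f)) ^ 2 := by
      rw [mul_pow, ← pow_mul, sq_abs, mul_comm (w i) 2]
    rw [← h2]
    exact pow_le_pow_left₀ (by positivity) h1 2
  calc wGradNorm w f x
      ≤ Real.sqrt (∑ _i : Fin n, (M * rho w x ^ d) ^ 2) :=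
        Real.sqrt_le_sqrt (Finset.sum_le_sum fun i _ => key i)
    _ = Real.sqrt ((n : ℝ) * (M * rho w x ^ d) ^ 2) := by
        rw [Finset.sum_const, Finset.card_univ, Fintype.card_fin, nsmul_eq_mul]
    _ = Real.sqrt n * (M * rho w x ^ d) := by
        rw [Real.sqrt_mul (Nat.cast_nonneg n), Real.sqrt_sq (by positivity)]
    _ = (Real.sqrt n * M) * rho w x ^ d := by ring
    _ ≤ (Real.sqrt n * M + 1) * rho w x ^ d :=
        mul_le_mul_of_nonneg_right (le_add_of_nonneg_right zero_le_one)
          (by positivity)
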